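/- For all r > 0, P_0(r)² < 1/(4 + r²). -/

import Mathlib

open Real Filter Set

/-- Modified Bessel function of the first kind of (integer) order `n`. -/
noncomputable def besselI (n : ℕ) (r : ℝ) : ℝ :=
  ∑' k : ℕ, (1 / (k.factorial * Real.Gamma (n + k + 1))) * (r / 2) ^ (n + 2 * k)

/-- `P n r = I_{n+1}(r) / (r * I_n(r))`. -/
noncomputable def P (n : ℕ) (r : ℝ) : ℝ := besselI (n + 1) r / (r * besselI n r)

lemma besselI_eq (n : ℕ) (r : ℝ) :
    besselI n r = ∑' k : ℕ, (r/2)^(n+2*k) / ((k.factorial : ℝ) * ((n+k).factorial : ℝ)) := by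
  unfold besselI
  refine tsum_congr fun k => ?_
  have h : ((n : ℝ) + k + 1) = ((n + k : ℕ) : ℝ) + 1 := by push_cast; ring
  rw [h, Real.Gamma_nat_eq_factorial]
  ring

lemma summable_bessel (n : ℕ) (x : ℝ) (hx : 0 ≤ x) :
    Summable (fun k : ℕ => x^(n+2*k) / ((k.factorial : ℝ) * ((n+k).factorial : ℝ))) := by
  refine Summable.of_nonneg_of_le (fun k => by positivity) (fun k => ?_)
    ((Real.summable_pow_div_factorial (x^2)).mul_left (x^n))
  have h : x^(n+2*k) = x^n * (x^2)^k := by rw [pow_add, pow_mul]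
  rw [h, mul_div_assoc]
  have h1 : (1:ℝ) ≤ ((n+k).factorial : ℝ) := by exact_mod_cast (n+k).factorial_pos
  gcongr
  exact le_mul_of_one_le_right (by positivity) h1


noncomputable def cc (n : ℕ) : ℝ :=
  ∑ i ∈ Finset.range (n+1), 1/(((i.factorial : ℝ))^2 * (((n-i).factorial : ℝ))^2)

noncomputable def dd (n : ℕ) : ℝ :=
  ∑ i ∈ Finset.range (n+1),
    1/((i.factorial : ℝ) * ((i+1).factorial : ℝ) * ((n-i).factorial : ℝ) * ((n-i+1).factorial : ℝ))

lemma cc_eq (n : ℕ) : cc n = ((2*n).choose n : ℝ) / ((n.factorial : ℝ))^2 := by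
  have hv : ((2*n).choose n : ℕ) = ∑ i ∈ Finset.range (n+1), n.choose i * n.choose (n-i) := by
    rw [two_mul, Nat.add_choose_eq, Finset.Nat.sum_antidiagonal_eq_sum_range_succ_mk]
  rw [cc, hv]
  push_cast
  rw [Finset.sum_div]
  refine Finset.sum_congr rfl fun i hi => ?_
  have hin : i ≤ n := Nat.lt_succ_iff.mp (Finset.mem_range.mp hi)
  rw [Nat.cast_choose ℝ hin, Nat.cast_choose ℝ (Nat.sub_le n i), Nat.sub_sub_self hin]
  have h1 : (i.factorial : ℝ) ≠ 0 := by positivity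
  have h2 : ((n-i).factorial : ℝ) ≠ 0 := by positivity
  have h3 : (n.factorial : ℝ) ≠ 0 := by positivity
  field_simp

lemma dd_eq (n : ℕ) : dd n = ((2*n+2).choose (n+1) : ℝ) / ((n.factorial : ℝ) * ((n+2).factorial : ℝ)) := by
  have hv : ((2*n+2).choose (n+1) : ℕ)
      = ∑ i ∈ Finset.range (n+2), n.choose i * (n+2).choose (n+1-i) := by
    rw [show 2*n+2 = n + (n+2) by ring, Nat.add_choose_eq,
      Finset.Nat.sum_antidiagonal_eq_sum_range_succ_mk]
  have hlast : n.choose (n+1) = 0 := Nat.choose_eq_zero_of_lt (Nat.lt_succ_self n)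
  have hv2 : ((2*n+2).choose (n+1) : ℕ)
      = ∑ i ∈ Finset.range (n+1), n.choose i * (n+2).choose (n+1-i) := by
    rw [hv, Finset.sum_range_succ, hlast, zero_mul, add_zero]
  rw [dd, hv2]
  push_cast
  rw [Finset.sum_div]
  refine Finset.sum_congr rfl fun i hi => ?_
  have hin : i ≤ n := Nat.lt_succ_iff.mp (Finset.mem_range.mp hi)
  have e1 : n+1-i = (n-i)+1 := by omega
  have e2 : (n+2) - (n+1-i) = i+1 := by omega
  rw [Nat.cast_choose ℝ hin, Nat.cast_choose ℝ (show n+1-i ≤ n+2 by omega), e2, e1]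
  have h1 : (i.factorial : ℝ) ≠ 0 := by positivity
  have h2 : ((n-i).factorial : ℝ) ≠ 0 := by positivity
  have h3 : (n.factorial : ℝ) ≠ 0 := by positivity
  have h4 : ((i+1).factorial : ℝ) ≠ 0 := by positivity
  have h5 : ((n-i+1).factorial : ℝ) ≠ 0 := by positivity
  have h6 : ((n+2).factorial : ℝ) ≠ 0 := by positivity
  field_simp

lemma key (n : ℕ) : dd (n+1) + dd n ≤ cc (n+1) := by
  have hN : (0:ℝ) ≤ (n:ℝ) := Nat.cast_nonneg n
  set B1 : ℝ := ((2*n+2).choose (n+1) : ℝ) with hB1def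
  set B2 : ℝ := ((2*n+4).choose (n+2) : ℝ) with hB2def
  have hB1 : 0 ≤ B1 := Nat.cast_nonneg _
  have hrec : ((n:ℝ)+2) * B2 = 2*(2*(n:ℝ)+3)*B1 := by
    have h := Nat.succ_mul_centralBinom_succ (n+1)
    rw [Nat.centralBinom, Nat.centralBinom] at h
    rw [show 2*(n+1+1) = 2*n+4 by ring, show 2*(n+1) = 2*n+2 by ring] at h
    have := congrArg (fun m : ℕ => (m : ℝ)) h
    push_cast at this
    rw [hB1def, hB2def]
    push_cast
    linarith [this]
  have hkey : B2 ≤ B1 * ((n:ℝ)+3) := by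
    nlinarith [mul_nonneg hB1 hN, mul_nonneg (mul_nonneg hB1 hN) hN]
  have hc : cc (n+1) = B1 / (((n+1).factorial : ℝ))^2 := by
    rw [cc_eq, show 2*(n+1) = 2*n+2 by ring]
  have hd1 : dd (n+1) = B2 / (((n+1).factorial : ℝ) * (((n+3).factorial : ℝ))) := by
    rw [dd_eq, show 2*(n+1)+2 = 2*n+4 by ring, show (n+1)+1 = n+2 from rfl,
      show (n+1)+2 = n+3 from rfl]
  have hd0 : dd n = B1 / ((n.factorial : ℝ) * (((n+2).factorial : ℝ))) := dd_eq n
  rw [hc, hd1, hd0]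
  have f3 : ((n+3).factorial : ℝ) = ((n:ℝ)+3) * ((n+2).factorial : ℝ) := by
    rw [show n+3 = (n+2)+1 from rfl, Nat.factorial_succ]; push_cast; ring
  have f2 : ((n+2).factorial : ℝ) = ((n:ℝ)+2) * ((n+1).factorial : ℝ) := by
    rw [show n+2 = (n+1)+1 from rfl, Nat.factorial_succ]; push_cast; ring
  have f1 : ((n+1).factorial : ℝ) = ((n:ℝ)+1) * ((n.factorial : ℝ)) := by
    rw [Nat.factorial_succ]; push_cast; ring
  have hf0 : (0:ℝ) < (n.factorial : ℝ) := by positivity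
  calc B2 / (((n+1).factorial : ℝ) * ((n+3).factorial : ℝ))
        + B1 / ((n.factorial : ℝ) * ((n+2).factorial : ℝ))
      ≤ (B1 * ((n:ℝ)+3)) / (((n+1).factorial : ℝ) * ((n+3).factorial : ℝ))
        + B1 / ((n.factorial : ℝ) * ((n+2).factorial : ℝ)) := by
        gcongr
    _ = B1 / (((n+1).factorial : ℝ))^2 := by
        rw [f3, f2, f1]
        have h1 : (0:ℝ) < (n:ℝ)+1 := by linarith
        have h2 : (0:ℝ) < (n:ℝ)+2 := by linarith
        have h3 : (0:ℝ) < (n:ℝ)+3 := by linarith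
        field_simp
        ring

lemma strict2 : dd 2 + dd 1 < cc 2 := by
  norm_num [cc, dd, Finset.sum_range_succ, Nat.factorial]


set_option maxHeartbeats 1000000 in
theorem P0_sq_lt (r : ℝ) (hr : 0 < r) :
    (P 0 r) ^ 2 < 1 / (4 + r ^ 2) := by
  have hx0 : (0:ℝ) < r/2 := by linarith
  set x : ℝ := r/2 with hxdef
  have hx : 0 < x := hx0
  set a : ℕ → ℝ := fun k => x^(2*k) / ((k.factorial : ℝ) * (k.factorial : ℝ)) with hadef
  set b : ℕ → ℝ := fun k => x^(2*k+1) / ((k.factorial : ℝ) * ((k+1).factorial : ℝ)) with hbdef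
  have hapos : ∀ k, 0 ≤ a k := fun k => by simp only [hadef]; positivity
  have hbpos : ∀ k, 0 ≤ b k := fun k => by simp only [hbdef]; positivity
  have hsa : Summable a := by
    refine (summable_bessel 0 x hx.le).congr fun k => ?_
    simp [hadef]
  have hsb : Summable b := by
    refine (summable_bessel 1 x hx.le).congr fun k => ?_
    simp only [hbdef]
    rw [show 1+2*k = 2*k+1 by omega, show 1+k = k+1 by omega]
  have h0 : besselI 0 r = ∑' k, a k := by
    rw [besselI_eq]
    refine tsum_congr fun k => ?_
    rw [← hxdef]
    simp [hadef]
  have h1 : besselI 1 r = ∑' k, b k := by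
    rw [besselI_eq]
    refine tsum_congr fun k => ?_
    rw [← hxdef]
    simp only [hbdef]
    rw [show 1+2*k = 2*k+1 by omega, show 1+k = k+1 by omega]
  have hI0 : 0 < ∑' k, a k := by
    refine Summable.tsum_pos hsa hapos 0 ?_
    simp [hadef]
  have hna : Summable (fun k => ‖a k‖) := by
    refine hsa.congr fun k => ?_
    rw [Real.norm_eq_abs, abs_of_nonneg (hapos k)]
  have hnb : Summable (fun k => ‖b k‖) := by
    refine hsb.congr fun k => ?_
    rw [Real.norm_eq_abs, abs_of_nonneg (hbpos k)]
  have hAA : (∑' k, a k) * (∑' k, a k) = ∑' n, ∑ k ∈ Finset.range (n+1), a k * a (n-k) :=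
    tsum_mul_tsum_eq_tsum_sum_range_of_summable_norm hna hna
  have hBB : (∑' k, b k) * (∑' k, b k) = ∑' n, ∑ k ∈ Finset.range (n+1), b k * b (n-k) :=
    tsum_mul_tsum_eq_tsum_sum_range_of_summable_norm hnb hnb
  have hA : ∀ n, (∑ k ∈ Finset.range (n+1), a k * a (n-k)) = x^(2*n) * cc n := by
    intro n
    rw [cc, Finset.mul_sum]
    refine Finset.sum_congr rfl fun k hk => ?_
    have hkn : k ≤ n := Nat.lt_succ_iff.mp (Finset.mem_range.mp hk)
    have hpow : x^(2*k) * x^(2*(n-k)) = x^(2*n) := by rw [← pow_add]; congr 1; omega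
    simp only [hadef]
    rw [div_mul_div_comm, hpow]
    ring
  have hB : ∀ n, (∑ k ∈ Finset.range (n+1), b k * b (n-k)) = x^(2*n+2) * dd n := by
    intro n
    rw [dd, Finset.mul_sum]
    refine Finset.sum_congr rfl fun k hk => ?_
    have hkn : k ≤ n := Nat.lt_succ_iff.mp (Finset.mem_range.mp hk)
    have hpow : x^(2*k+1) * x^(2*(n-k)+1) = x^(2*n+2) := by rw [← pow_add]; congr 1; omega
    simp only [hbdef]
    rw [div_mul_div_comm, hpow]
    ring
  have hSA : Summable (fun n => x^(2*n) * cc n) :=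
    ((summable_norm_sum_mul_range_of_summable_norm hna hna).of_norm).congr hA
  have hSB : Summable (fun n => x^(2*n+2) * dd n) :=
    ((summable_norm_sum_mul_range_of_summable_norm hnb hnb).of_norm).congr hB
  -- reduce the goal
  rw [show P 0 r = besselI 1 r / (r * besselI 0 r) from rfl, h0, h1, div_pow]
  have hden : (0:ℝ) < (r * ∑' k, a k)^2 := pow_pos (mul_pos hr hI0) 2
  have h4r : (0:ℝ) < 4 + r^2 := by positivity
  rw [div_lt_div_iff₀ hden h4r, one_mul, mul_pow]
  have hr2 : r^2 = 4*x^2 := by rw [hxdef]; ring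
  rw [hr2, pow_two (∑' k, b k), pow_two (∑' k, a k), hAA, hBB, tsum_congr hA, tsum_congr hB]
  -- goal : (∑' n, x^(2n+2) dd n) * (4+4x²) < 4x² * (∑' n, x^(2n) cc n)
  have hxA : x^2 * (∑' n, x^(2*n) * cc n) = ∑' n, x^(2*n+2) * cc n := by
    rw [← tsum_mul_left]
    exact tsum_congr fun n => by ring
  have hxB : x^2 * (∑' n, x^(2*n+2) * dd n) = ∑' n, x^(2*n+4) * dd n := by
    rw [← tsum_mul_left]
    exact tsum_congr fun n => by ring
  have hSA2 : Summable (fun n => x^(2*n+2) * cc n) :=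
    (hSA.mul_left (x^2)).congr fun n => by ring
  have hSB2 : Summable (fun n => x^(2*n+4) * dd n) :=
    (hSB.mul_left (x^2)).congr fun n => by ring
  have hSBshift : Summable (fun n => x^(2*(n+1)+2) * dd (n+1)) :=
    (summable_nat_add_iff (f := fun m => x^(2*m+2) * dd m) 1).mpr hSB
  have hSAshift : Summable (fun n => x^(2*(n+1)+2) * cc (n+1)) :=
    (summable_nat_add_iff (f := fun m => x^(2*m+2) * cc m) 1).mpr hSA2
  have hsplitB : (∑' n, x^(2*n+2) * dd n)
      = x^(2*0+2) * dd 0 + ∑' n, x^(2*(n+1)+2) * dd (n+1) := Summable.tsum_eq_zero_add hSB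
  have hsplitA : (∑' n, x^(2*n+2) * cc n)
      = x^(2*0+2) * cc 0 + ∑' n, x^(2*(n+1)+2) * cc (n+1) := Summable.tsum_eq_zero_add hSA2
  have hdd0 : dd 0 = cc 0 := by norm_num [cc, dd]
  have hterm : ∀ n, x^(2*(n+1)+2) * dd (n+1) + x^(2*n+4) * dd n
      ≤ x^(2*(n+1)+2) * cc (n+1) := by
    intro n
    have e : x^(2*(n+1)+2) = x^(2*n+4) := by ring
    rw [e, ← mul_add]
    exact mul_le_mul_of_nonneg_left (key n) (by positivity)
  have hstrict : x^(2*(1+1)+2) * dd (1+1) + x^(2*1+4) * dd 1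
      < x^(2*(1+1)+2) * cc (1+1) := by
    have e : x^(2*(1+1)+2) = x^(2*1+4) := by norm_num
    rw [e, ← mul_add]
    exact mul_lt_mul_of_pos_left strict2 (by positivity)
  have hsum_lt : (∑' n, (x^(2*(n+1)+2) * dd (n+1) + x^(2*n+4) * dd n))
      < ∑' n, x^(2*(n+1)+2) * cc (n+1) :=
    Summable.tsum_lt_tsum hterm hstrict (hSBshift.add hSB2) hSAshift
  have hmain : (∑' n, x^(2*n+2) * dd n) + x^2 * (∑' n, x^(2*n+2) * dd n)
      < x^2 * (∑' n, x^(2*n) * cc n) := by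
    rw [hxB, hxA, hsplitA, hsplitB, hdd0]
    have : (∑' n, x^(2*(n+1)+2) * dd (n+1)) + (∑' n, x^(2*n+4) * dd n)
        = ∑' n, (x^(2*(n+1)+2) * dd (n+1) + x^(2*n+4) * dd n) :=
      (Summable.tsum_add hSBshift hSB2).symm
    linarith [hsum_lt, this.ge, this.le]
  nlinarith [hmain]
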